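/- Every element g of Thompson's group T can be written as a pcq expression; that is, there exist n, m ≥ 0, indices 0 ≤ i_1 < ··· < i_n and 0 ≤ j_1 < ··· < j_m, exponents r_1,…,r_n > 0 and s_1,…,s_m > 0, and either integers i ≥ 0, j with 1 ≤ j < i+2 or no torsion factor, such that g = x_{i_1}^{r_1}···x_{i_n}^{r_n} · c_i^j · x_{j_m}^{-s_m}···x_{j_1}^{-s_1}. -/

import Mathlib

/-- Relators of the standard infinite presentation of Thompson's group `T`,
on generators `Sum.inl i ↦ x_i` and `Sum.inr i ↦ c_i`. -/
def TRel : Set (FreeGroup (ℕ ⊕ ℕ)) :=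
  { r | (∃ i j : ℕ, i < j ∧
        r = FreeGroup.of (Sum.inl j) * FreeGroup.of (Sum.inl i) *
            (FreeGroup.of (Sum.inl i) * FreeGroup.of (Sum.inl (j + 1)))⁻¹) ∨
    (∃ k n : ℕ, k < n ∧
        r = FreeGroup.of (Sum.inl k) * FreeGroup.of (Sum.inr (n + 1)) *
            (FreeGroup.of (Sum.inr n) * FreeGroup.of (Sum.inl (k + 1)))⁻¹) ∨
    (∃ n : ℕ, r = FreeGroup.of (Sum.inr n) * FreeGroup.of (Sum.inl 0) *
            ((FreeGroup.of (Sum.inr (n + 1))) ^ 2)⁻¹) ∨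
    (∃ n : ℕ, r = FreeGroup.of (Sum.inr n) *
            (FreeGroup.of (Sum.inl n) * FreeGroup.of (Sum.inr (n + 1)))⁻¹) ∨
    (∃ n : ℕ, r = (FreeGroup.of (Sum.inr n)) ^ (n + 2)) }

/-- Thompson's group `T`. -/
abbrev ThompsonT : Type := PresentedGroup TRel

/-- The generator `x_i` of `T`. -/
def x (i : ℕ) : ThompsonT := PresentedGroup.of (Sum.inl i)

/-- The torsion generator `c_i` of `T`. -/
def c (i : ℕ) : ThompsonT := PresentedGroup.of (Sum.inr i)

/-- The product `x_{i_1}^{r_1} ⋯ x_{i_n}^{r_n}` in `T` encoded by a list of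
(index, exponent) pairs. -/
def posPart (l : List (ℕ × ℕ)) : ThompsonT := (l.map fun p => x p.1 ^ p.2).prod

/-- The indices of the list are strictly increasing. -/
def Increasing (l : List (ℕ × ℕ)) : Prop := l.Chain' fun a b => a.1 < b.1

/-- All exponents of the list are positive. -/
def PosExps (l : List (ℕ × ℕ)) : Prop := ∀ a ∈ l, 0 < a.2

namespace TAux
open FreeGroup

def pi : FreeGroup (ℕ ⊕ ℕ) →* ThompsonT := QuotientGroup.mk' _

lemma pi_rel {r : FreeGroup (ℕ ⊕ ℕ)} (h : r ∈ TRel) : pi r = 1 :=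
  (QuotientGroup.eq_one_iff r).2 (Subgroup.subset_normalClosure h)

lemma x_eq (i : ℕ) : x i = pi (FreeGroup.of (Sum.inl i)) := rfl
lemma c_eq (i : ℕ) : c i = pi (FreeGroup.of (Sum.inr i)) := rfl

lemma r1 {i j : ℕ} (h : i < j) : x j * x i = x i * x (j+1) := by
  have h2 := pi_rel (Or.inl ⟨i, j, h, rfl⟩)
  simp only [MonoidHom.map_mul, MonoidHom.map_inv, mul_inv_eq_one] at h2
  exact h2

lemma r2 {k n : ℕ} (h : k < n) : x k * c (n+1) = c n * x (k+1) := by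
  have h2 := pi_rel (Or.inr (Or.inl ⟨k, n, h, rfl⟩))
  simp only [MonoidHom.map_mul, MonoidHom.map_inv, mul_inv_eq_one] at h2
  exact h2

lemma r3 (n : ℕ) : c n * x 0 = c (n+1) ^ 2 := by
  have h2 := pi_rel (Or.inr (Or.inr (Or.inl ⟨n, rfl⟩)))
  simp only [MonoidHom.map_mul, MonoidHom.map_pow, MonoidHom.map_inv, mul_inv_eq_one] at h2
  exact h2

lemma r4 (n : ℕ) : c n = x n * c (n+1) := by
  have h2 := pi_rel (Or.inr (Or.inr (Or.inr (Or.inl ⟨n, rfl⟩))))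
  simp only [MonoidHom.map_mul, MonoidHom.map_inv, mul_inv_eq_one] at h2
  exact h2

lemma r5 (n : ℕ) : c n ^ (n+2) = 1 := by
  have h2 := pi_rel (Or.inr (Or.inr (Or.inr (Or.inr ⟨n, rfl⟩))))
  rw [MonoidHom.map_pow] at h2
  exact h2

end TAux
namespace TAux

private lemma auxA {G : Type*} [Group G] {a b c d : G} (h : a * b = c * d) :
    a⁻¹ * c = b * d⁻¹ := by
  have h2 : a * b * d⁻¹ = c := by rw [h]; group
  rw [← h2]; group

private lemma auxB {G : Type*} [Group G] {a b d : G} (h : a * b = b * d) :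
    b⁻¹ * a = d * b⁻¹ := by
  have h2 : b * d * b⁻¹ = a := by rw [← h]; group
  rw [← h2]; group

/-- for i < k : x k⁻¹ * x i = x i * x (k+1)⁻¹ -/
lemma d1 {i k : ℕ} (h : i < k) : (x k)⁻¹ * x i = x i * (x (k+1))⁻¹ :=
  auxA (r1 h)

/-- for k < i : x k⁻¹ * x i = x (i+1) * x k⁻¹ -/
lemma d2 {k i : ℕ} (h : k < i) : (x k)⁻¹ * x i = x (i+1) * (x k)⁻¹ :=
  auxB (r1 h)

/-- for k < n : x k⁻¹ * c n = c (n+1) * x (k+1)⁻¹ -/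
lemma d3 {k n : ℕ} (h : k < n) : (x k)⁻¹ * c n = c (n+1) * (x (k+1))⁻¹ :=
  auxA (r2 h)

lemma d4 (n : ℕ) : (x n)⁻¹ * c n = c (n+1) := by
  rw [r4 n]; group

lemma d5 (n : ℕ) : c n = c (n+1) ^ 2 * (x 0)⁻¹ := by
  rw [← r3 n]; group

lemma cpow_mod (n e : ℕ) : c n ^ e = c n ^ (e % (n+2)) :=
  pow_eq_pow_mod e (r5 n)

lemma cpow_inv {n e : ℕ} (h : e ≤ n+2) : (c n ^ e)⁻¹ = c n ^ (n+2-e) := by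
  apply inv_eq_of_mul_eq_one_right
  rw [← pow_add]
  have : e + (n+2-e) = n+2 := by omega
  rw [this, r5]

end TAux
namespace TAux

def PosProd (L : List ℕ) : ThompsonT := (L.map x).prod
def NegProd (L : List ℕ) : ThompsonT := (L.map fun i => (x i)⁻¹).prod

@[simp] lemma PosProd_nil : PosProd [] = 1 := rfl
@[simp] lemma NegProd_nil : NegProd [] = 1 := rfl
lemma PosProd_cons (a : ℕ) (L : List ℕ) : PosProd (a :: L) = x a * PosProd L := by
  simp [PosProd]
lemma NegProd_cons (a : ℕ) (L : List ℕ) : NegProd (a :: L) = (x a)⁻¹ * NegProd L := by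
  simp [NegProd]
lemma PosProd_append (L M : List ℕ) : PosProd (L ++ M) = PosProd L * PosProd M := by
  simp [PosProd]
lemma NegProd_append (L M : List ℕ) : NegProd (L ++ M) = NegProd L * NegProd M := by
  simp [NegProd]

lemma NegProd_eq (L : List ℕ) : NegProd L = (PosProd L.reverse)⁻¹ := by
  induction L with
  | nil => simp
  | cons a t ih =>
      rw [NegProd_cons, ih, List.reverse_cons, PosProd_append]
      simp [PosProd_cons]

lemma PosProd_inv (L : List ℕ) : (PosProd L)⁻¹ = NegProd L.reverse := by
  rw [NegProd_eq, List.reverse_reverse]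

/-- c n = x n x (n+1) ⋯ x (n+d-1) * c (n+d) -/
lemma block (d n : ℕ) : c n = PosProd (List.range' n d) * c (n+d) := by
  induction d generalizing n with
  | zero => simp
  | succ d ih =>
      have hn : n + (d+1) = (n+1) + d := by omega
      rw [hn, List.range'_succ, PosProd_cons, mul_assoc, ← ih (n+1), ← r4 n]

/-- S1 : pure shift -/
lemma S1 {a k n : ℕ} (h : k + a ≤ n) :
    (x k)⁻¹ * c n ^ a = c (n+1) ^ a * (x (k+a))⁻¹ := by
  induction a generalizing k with
  | zero => simp
  | succ a ih =>
      have hk : k < n := by omega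
      calc (x k)⁻¹ * c n ^ (a+1) = ((x k)⁻¹ * c n) * c n ^ a := by
            rw [pow_succ' (c n)]; group
        _ = c (n+1) * ((x (k+1))⁻¹ * c n ^ a) := by rw [d3 hk]; group
        _ = c (n+1) * (c (n+1) ^ a * (x (k+1+a))⁻¹) := by rw [ih (by omega)]
        _ = c (n+1) ^ (a+1) * (x (k+(a+1)))⁻¹ := by
            rw [pow_succ' (c (n+1))]
            have : k+1+a = k+(a+1) := by omega
            rw [this]; group

/-- merge lemma -/
lemma Mmerge {b n d : ℕ} (h1 : 1 ≤ d) (h2 : d ≤ n+1) :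
    c (n+1) ^ b * c n ^ d = c (n+1) ^ (b+d+1) * (x (d-1))⁻¹ := by
  obtain ⟨e, rfl⟩ : ∃ e, d = e + 1 := ⟨d - 1, by omega⟩
  calc c (n+1) ^ b * c n ^ (e+1) = c (n+1) ^ b * (c n * c n ^ e) := by
        rw [pow_succ' (c n)]
    _ = c (n+1) ^ b * (c (n+1) ^ 2 * ((x 0)⁻¹ * c n ^ e)) := by
        rw [d5 n]; group
    _ = c (n+1) ^ b * (c (n+1) ^ 2 * (c (n+1) ^ e * (x (0+e))⁻¹)) := by
        rw [S1 (by omega)]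
    _ = c (n+1) ^ (b+(e+1)+1) * (x (e+1-1))⁻¹ := by
        have h0 : (0:ℕ) + e = e := by omega
        rw [h0, ← mul_assoc, ← mul_assoc, ← pow_add, ← pow_add]
        have h3 : b + 2 + e = b+(e+1)+1 := by omega
        have h4 : e + 1 - 1 = e := by omega
        rw [h3, h4]

lemma Rraise {n d : ℕ} (h1 : 1 ≤ d) (h2 : d ≤ n+1) :
    c n ^ d = c (n+1) ^ (d+1) * (x (d-1))⁻¹ := by
  have := Mmerge (b := 0) h1 h2
  simpa using this

end TAux
namespace TAux

/-- the k ≤ n case, no recursion needed -/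
lemma XCbase {k n a : ℕ} (hk : k ≤ n) (ha1 : 1 ≤ a) (ha2 : a ≤ n+1) :
    ∃ a' L, 1 ≤ a' ∧ a' ≤ n + 2 ∧
      (x k)⁻¹ * c n ^ a = c (n + 1) ^ a' * NegProd L := by
  by_cases hsm : k + a ≤ n
  · exact ⟨a, [k+a], ha1, by omega, by
      rw [S1 hsm, NegProd_cons]; simp⟩
  · -- absorb
    set i := n - k with hi
    have hik : k + i = n := by omega
    have hia : i < a := by omega
    have hsplit : c n ^ a = c n ^ i * (c n * c n ^ (a-i-1)) := by
      rw [← pow_succ' (c n), ← pow_add]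
      congr 1
      omega
    have step1 : (x k)⁻¹ * c n ^ i = c (n+1) ^ i * (x n)⁻¹ := by
      have := S1 (a := i) (k := k) (n := n) (by omega)
      rwa [hik] at this
    by_cases hd : a - i - 1 = 0
    · refine ⟨i+1, [], by omega, by omega, ?_⟩
      calc (x k)⁻¹ * c n ^ a = ((x k)⁻¹ * c n ^ i) * (c n * c n ^ (a-i-1)) := by
            rw [hsplit]; group
        _ = c (n+1) ^ i * ((x n)⁻¹ * c n) * c n ^ (a-i-1) := by rw [step1]; group
        _ = c (n+1) ^ i * c (n+1) * c n ^ (a-i-1) := by rw [d4]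
        _ = c (n+1) ^ (i+1) * NegProd [] := by
            rw [hd, pow_zero, pow_succ]; simp
    · refine ⟨a+1, [a-i-1-1], by omega, by omega, ?_⟩
      calc (x k)⁻¹ * c n ^ a = ((x k)⁻¹ * c n ^ i) * (c n * c n ^ (a-i-1)) := by
            rw [hsplit]; group
        _ = c (n+1) ^ i * ((x n)⁻¹ * c n) * c n ^ (a-i-1) := by rw [step1]; group
        _ = c (n+1) ^ (i+1) * c n ^ (a-i-1) := by rw [d4, pow_succ]
        _ = c (n+1) ^ ((i+1)+(a-i-1)+1) * (x (a-i-1-1))⁻¹ := by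
            rw [Mmerge (by omega) (by omega)]
        _ = c (n+1) ^ (a+1) * NegProd [a-i-1-1] := by
            rw [NegProd_cons]
            simp
            congr 2
            omega

/-- Main lemma: pushing x k⁻¹ into a torsion power. -/
lemma XCaux : ∀ (t k n a : ℕ), k ≤ n + t → 1 ≤ a → a ≤ n+1 →
    ∃ a' L, 1 ≤ a' ∧ a' ≤ (max n k) + 2 ∧
      (x k)⁻¹ * c n ^ a = c ((max n k) + 1) ^ a' * NegProd L := by
  intro t
  induction t with
  | zero =>
      intro k n a hk ha1 ha2
      have hkn : k ≤ n := by omega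
      have hmax : max n k = n := by omega
      rw [hmax]
      exact XCbase hkn ha1 ha2
  | succ t ih =>
      intro k n a hk ha1 ha2
      by_cases hkn : k ≤ n
      · have hmax : max n k = n := by omega
        rw [hmax]
        exact XCbase hkn ha1 ha2
      · -- k > n : raise
        push_neg at hkn
        have hmax : max n k = k := by omega
        obtain ⟨a', L', h1, h2, h3⟩ := ih k (n+1) (a+1) (by omega) (by omega) (by omega)
        have hmax2 : max (n+1) k = k := by omega
        rw [hmax2] at h2 h3
        refine ⟨a', L' ++ [a-1], h1, by omega, ?_⟩
        rw [hmax]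
        calc (x k)⁻¹ * c n ^ a
            = (x k)⁻¹ * (c (n+1) ^ (a+1) * (x (a-1))⁻¹) := by
              rw [← Rraise ha1 ha2]
          _ = ((x k)⁻¹ * c (n+1) ^ (a+1)) * (x (a-1))⁻¹ := by group
          _ = c (k+1) ^ a' * NegProd L' * (x (a-1))⁻¹ := by rw [h3]
          _ = c (k+1) ^ a' * NegProd (L' ++ [a-1]) := by
              rw [NegProd_append]
              simp [NegProd_cons]
              group

end TAux
namespace TAux

lemma XC {k n a : ℕ} (ha1 : 1 ≤ a) (ha2 : a ≤ n+1) :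
    ∃ a' L, 1 ≤ a' ∧ a' ≤ (max n k) + 2 ∧
      (x k)⁻¹ * c n ^ a = c ((max n k) + 1) ^ a' * NegProd L :=
  XCaux k k n a (by omega) ha1 ha2

/-- pushing a torsion power right past a positive generator. -/
lemma cxp {i n e : ℕ} (he1 : 1 ≤ e) (he2 : e ≤ n+1) :
    ∃ e' L, 1 ≤ e' ∧ e' ≤ (max n i) + 2 ∧
      c n ^ e * x i = PosProd L * c ((max n i) + 1) ^ e' := by
  set E := n + 2 - e with hE
  obtain ⟨a', L, h1, h2, h3⟩ := XC (k := i) (n := n) (a := E) (by omega) (by omega)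
  set N := max n i + 1 with hN
  refine ⟨N + 2 - a', L.reverse, by omega, by omega, ?_⟩
  have key : (c n ^ E)⁻¹ * x i = ((x i)⁻¹ * c n ^ E)⁻¹ := by group
  have hce : (c n ^ E)⁻¹ = c n ^ e := by
    rw [cpow_inv (by omega)]
    congr 1
    omega
  rw [← hce, key, h3, mul_inv_rev, NegProd_eq, inv_inv, cpow_inv (by omega)]

/-- pushing a torsion power right past a positive word. -/
lemma CP : ∀ (P : List ℕ) (n e : ℕ), 1 ≤ e → e ≤ n+1 →
    ∃ L n' e', 1 ≤ e' ∧ e' ≤ n'+1 ∧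
      c n ^ e * PosProd P = PosProd L * c n' ^ e' := by
  intro P
  induction P with
  | nil => intro n e h1 h2; exact ⟨[], n, e, h1, h2, by simp⟩
  | cons a t ih =>
      intro n e h1 h2
      obtain ⟨e1, L1, g1, g2, g3⟩ := cxp (i := a) (n := n) h1 h2
      obtain ⟨L2, n', e', f1, f2, f3⟩ := ih (max n a + 1) e1 g1 (by omega)
      refine ⟨L1 ++ L2, n', e', f1, f2, ?_⟩
      rw [PosProd_cons, PosProd_append]
      calc c n ^ e * (x a * PosProd t) = (c n ^ e * x a) * PosProd t := by group
        _ = PosProd L1 * (c (max n a + 1) ^ e1 * PosProd t) := by rw [g3]; group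
        _ = PosProd L1 * (PosProd L2 * c n' ^ e') := by rw [f3]
        _ = PosProd L1 * PosProd L2 * c n' ^ e' := by group

/-- tracking through a block : index lands exactly on n+d. -/
lemma TRack : ∀ (d n e : ℕ), e ≤ n+1 →
    ∃ L e', e' ≤ n+d+1 ∧
      c n ^ e * PosProd (List.range' n d) = PosProd L * c (n+d) ^ e' := by
  intro d
  induction d with
  | zero => intro n e he; exact ⟨[], e, by omega, by simp⟩
  | succ d ih =>
      intro n e he
      by_cases he0 : e = 0
      · exact ⟨List.range' n (d+1), 0, by omega, by simp [he0]⟩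
      · obtain ⟨e1, L1, g1, g2, g3⟩ := cxp (i := n) (n := n) (by omega) he
        have hmax : max n n = n := by omega
        rw [hmax] at g2 g3
        obtain ⟨L2, e', f1, f2⟩ := ih (n+1) e1 (by omega)
        refine ⟨L1 ++ L2, e', by omega, ?_⟩
        have hr : List.range' n (d+1) = n :: List.range' (n+1) d := by
          rw [List.range'_succ]
        have hnd : n + (d+1) = (n+1) + d := by omega
        rw [hr, hnd, PosProd_cons, PosProd_append]
        calc c n ^ e * (x n * PosProd (List.range' (n+1) d))
            = (c n ^ e * x n) * PosProd (List.range' (n+1) d) := by group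
          _ = PosProd L1 * (c (n+1) ^ e1 * PosProd (List.range' (n+1) d)) := by
              rw [g3]; group
          _ = PosProd L1 * (PosProd L2 * c (n+1+d) ^ e') := by rw [f2]
          _ = PosProd L1 * PosProd L2 * c (n+1+d) ^ e' := by group

/-- merging two torsion powers, left index ≤ right index. -/
lemma CCle {n m a b : ℕ} (hnm : n ≤ m) (ha : a ≤ n+1) (hb : b ≤ m+1) :
    ∃ L e', e' ≤ m+1 ∧ c n ^ a * c m ^ b = PosProd L * c m ^ e' := by
  rcases Nat.eq_zero_or_pos a with ha0 | hap
  · exact ⟨[], b, hb, by simp [ha0]⟩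
  · have hsplit : c n ^ a = c n ^ (a-1) * c n := by
      rw [← pow_succ]
      congr 1
      omega
    have hblock : c n = PosProd (List.range' n (m-n)) * c m := by
      have := block (m-n) n
      rwa [show n + (m-n) = m by omega] at this
    obtain ⟨L1, e1, f1, f2⟩ := TRack (m-n) n (a-1) (by omega)
    rw [show n + (m-n) = m by omega] at f2
    refine ⟨L1, (e1 + (b+1)) % (m+2), by have := Nat.mod_lt (e1+(b+1)) (show 0 < m+2 by omega); omega, ?_⟩
    calc c n ^ a * c m ^ b = c n ^ (a-1) * (c n * c m ^ b) := by
          rw [hsplit]; group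
      _ = c n ^ (a-1) * (PosProd (List.range' n (m-n)) * c m ^ (b+1)) := by
          rw [hblock, pow_succ']; group
      _ = (c n ^ (a-1) * PosProd (List.range' n (m-n))) * c m ^ (b+1) := by group
      _ = PosProd L1 * c m ^ e1 * c m ^ (b+1) := by rw [f2]
      _ = PosProd L1 * c m ^ (e1 + (b+1)) := by rw [mul_assoc, ← pow_add]
      _ = PosProd L1 * c m ^ ((e1 + (b+1)) % (m+2)) := by rw [← cpow_mod]

/-- merging two torsion powers, left index > right index. -/
lemma CCgtAux : ∀ (t n m a b : ℕ), m + t = n → a ≤ n+1 → b ≤ m+1 →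
    ∃ e' L, e' ≤ n+1 ∧ c n ^ a * c m ^ b = c n ^ e' * NegProd L := by
  intro t
  induction t with
  | zero =>
      intro n m a b h ha hb
      subst h
      simp only [Nat.add_zero]
      exact ⟨(a+b) % (m+2), [], by have := Nat.mod_lt (a+b) (show 0 < m+2 by omega); omega, by rw [← pow_add, ← cpow_mod]; simp⟩
  | succ t ih =>
      intro n m a b h ha hb
      rcases Nat.eq_zero_or_pos b with hb0 | hbp
      · exact ⟨a, [], ha, by simp [hb0]⟩
      · obtain ⟨e', L', f1, f2⟩ := ih n (m+1) a (b+1) (by omega) ha (by omega)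
        refine ⟨e', L' ++ [b-1], f1, ?_⟩
        calc c n ^ a * c m ^ b = c n ^ a * (c (m+1) ^ (b+1) * (x (b-1))⁻¹) := by
              rw [← Rraise (by omega) hb]
          _ = (c n ^ a * c (m+1) ^ (b+1)) * (x (b-1))⁻¹ := by group
          _ = c n ^ e' * NegProd L' * (x (b-1))⁻¹ := by rw [f2]
          _ = c n ^ e' * NegProd (L' ++ [b-1]) := by
              rw [NegProd_append, NegProd_cons]
              simp
              group

lemma CCgt {n m a b : ℕ} (h : m ≤ n) (ha : a ≤ n+1) (hb : b ≤ m+1) :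
    ∃ e' L, e' ≤ n+1 ∧ c n ^ a * c m ^ b = c n ^ e' * NegProd L :=
  CCgtAux (n - m) n m a b (by omega) ha hb

end TAux
namespace TAux

abbrev SortedLE (L : List ℕ) : Prop := L.Pairwise (· ≤ ·)
abbrev SortedGE (L : List ℕ) : Prop := L.Pairwise (· ≥ ·)

/-- insert a generator on the left of a sorted positive word -/
def insL : List ℕ → ℕ → List ℕ
  | [], k => [k]
  | i :: t, k => if k ≤ i then k :: i :: t else i :: insL t (k+1)

lemma insL_eq : ∀ (P : List ℕ) (k : ℕ), x k * PosProd P = PosProd (insL P k) := by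
  intro P
  induction P with
  | nil => intro k; simp [insL, PosProd_cons]
  | cons i t ih =>
      intro k
      by_cases h : k ≤ i
      · simp [insL, h, PosProd_cons]
      · push_neg at h
        simp only [insL, if_neg (not_le.mpr h)]
        rw [PosProd_cons, PosProd_cons, ← mul_assoc, r1 h, mul_assoc, ih (k+1)]

lemma insL_lb : ∀ (P : List ℕ) (k b : ℕ), b ≤ k → (∀ a ∈ P, b ≤ a) →
    ∀ a ∈ insL P k, b ≤ a := by
  intro P
  induction P with
  | nil => intro k b hk _ a ha; simp [insL] at ha; omega
  | cons i t ih =>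
      intro k b hk hP a ha
      by_cases h : k ≤ i
      · simp [insL, h] at ha
        rcases ha with h1 | h1 | h1
        · omega
        · exact h1 ▸ hP i (by simp)
        · exact hP a (by simp [h1])
      · simp only [insL, if_neg h, List.mem_cons] at ha
        rcases ha with h1 | h1
        · exact h1 ▸ hP i (by simp)
        · exact ih (k+1) b (by omega) (fun a ha => hP a (by simp [ha])) a h1

lemma insL_sorted : ∀ (P : List ℕ) (k : ℕ), SortedLE P → SortedLE (insL P k) := by
  intro P
  induction P with
  | nil => intro k _; simp [insL]
  | cons i t ih =>
      intro k hs
      obtain ⟨hs1, hs2⟩ := List.pairwise_cons.mp hs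
      by_cases h : k ≤ i
      · simp only [insL, if_pos h]
        refine List.pairwise_cons.mpr ⟨?_, hs⟩
        intro b hb
        simp at hb
        rcases hb with h1 | h1
        · omega
        · have := hs1 b h1; omega
      · push_neg at h
        simp only [insL, if_neg (not_le.mpr h)]
        exact List.pairwise_cons.mpr ⟨insL_lb t (k+1) i (by omega) hs1, ih (k+1) hs2⟩

/-- insert a generator-inverse on the left of a reversed-sorted negative word -/
def insN : List ℕ → ℕ → List ℕ
  | [], l => [l]
  | a :: r, l => if a ≤ l then l :: a :: r else (a+1) :: insN r l

lemma insN_eq : ∀ (R : List ℕ) (l : ℕ), (x l)⁻¹ * NegProd R = NegProd (insN R l) := by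
  intro R
  induction R with
  | nil => intro l; simp [insN, NegProd_cons]
  | cons a r ih =>
      intro l
      by_cases h : a ≤ l
      · simp [insN, h, NegProd_cons]
      · push_neg at h
        simp only [insN, if_neg (not_le.mpr h)]
        rw [NegProd_cons, NegProd_cons, ← mul_assoc, ← ih l, ← mul_assoc]
        congr 1
        have h2 := r1 h
        have : (x l)⁻¹ * (x a)⁻¹ = (x (a+1))⁻¹ * (x l)⁻¹ := by
          rw [← mul_inv_rev, ← mul_inv_rev, ← h2]
        rw [this]

lemma insN_ub : ∀ (R : List ℕ) (l B : ℕ), l ≤ B → (∀ a ∈ R, a ≤ B) →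
    ∀ a ∈ insN R l, a ≤ B + 1 := by
  intro R
  induction R with
  | nil => intro l B hl _ a ha; simp [insN] at ha; omega
  | cons i r ih =>
      intro l B hl hR a ha
      by_cases h : i ≤ l
      · simp [insN, h] at ha
        rcases ha with h1 | h1 | h1
        · omega
        · have := hR i (by simp); omega
        · have := hR a (by simp [h1]); omega
      · simp only [insN, if_neg h, List.mem_cons] at ha
        rcases ha with h1 | h1
        · have := hR i (by simp); omega
        · exact ih l B hl (fun a ha => hR a (by simp [ha])) a h1

lemma insN_sorted : ∀ (R : List ℕ) (l : ℕ), SortedGE R → SortedGE (insN R l) := by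
  intro R
  induction R with
  | nil => intro l _; simp [insN]
  | cons i r ih =>
      intro l hs
      obtain ⟨hs1, hs2⟩ := List.pairwise_cons.mp hs
      by_cases h : i ≤ l
      · simp only [insN, if_pos h]
        refine List.pairwise_cons.mpr ⟨?_, hs⟩
        intro b hb
        simp at hb
        rcases hb with h1 | h1
        · omega
        · have := hs1 b h1; omega
      · push_neg at h
        simp only [insN, if_neg (not_le.mpr h)]
        refine List.pairwise_cons.mpr ⟨?_, ih l hs2⟩
        intro b hb
        exact insN_ub r l i (by omega) hs1 b hb

/-- fold a raw positive word into a sorted one -/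
def sortP (A : List ℕ) (P : List ℕ) : List ℕ := A.foldr (fun a acc => insL acc a) P

lemma sortP_eq : ∀ (A P : List ℕ), PosProd A * PosProd P = PosProd (sortP A P) := by
  intro A
  induction A with
  | nil => intro P; simp [sortP]
  | cons a t ih =>
      intro P
      rw [PosProd_cons, mul_assoc, ih P]
      exact insL_eq _ a

lemma sortP_sorted : ∀ (A P : List ℕ), SortedLE P → SortedLE (sortP A P) := by
  intro A
  induction A with
  | nil => intro P h; exact h
  | cons a t ih => intro P h; exact insL_sorted _ a (ih P h)

/-- fold a raw negative word into a reverse-sorted one -/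
def sortN (A : List ℕ) (R : List ℕ) : List ℕ := A.foldr (fun a acc => insN acc a) R

lemma sortN_eq : ∀ (A R : List ℕ), NegProd A * NegProd R = NegProd (sortN A R) := by
  intro A
  induction A with
  | nil => intro R; simp [sortN]
  | cons a t ih =>
      intro R
      rw [NegProd_cons, mul_assoc, ih R]
      exact insN_eq _ a

lemma sortN_sorted : ∀ (A R : List ℕ), SortedGE R → SortedGE (sortN A R) := by
  intro A
  induction A with
  | nil => intro R h; exact h
  | cons a t ih => intro R h; exact insN_sorted _ a (ih R h)

end TAux
namespace TAux

lemma shiftL : ∀ (L : List ℕ) (k : ℕ), (∀ i ∈ L, k < i) →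
    (x k)⁻¹ * PosProd L = PosProd (L.map (· + 1)) * (x k)⁻¹ := by
  intro L
  induction L with
  | nil => intro k _; simp
  | cons a t ih =>
      intro k hk
      have ha : k < a := hk a (by simp)
      rw [PosProd_cons, List.map_cons, PosProd_cons, ← mul_assoc, d2 ha,
        mul_assoc, ih k (fun i hi => hk i (by simp [hi])), ← mul_assoc]

/-- pushing x k⁻¹ rightwards into a sorted positive word. -/
lemma pushXinv : ∀ (P : List ℕ) (k : ℕ), SortedLE P →
    (∃ P', SortedLE P' ∧ (∀ b, (∀ a ∈ P, b ≤ a) → ∀ a ∈ P', b ≤ a) ∧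
      (x k)⁻¹ * PosProd P = PosProd P') ∨
    (∃ P' k', SortedLE P' ∧ (∀ b, (∀ a ∈ P, b ≤ a) → ∀ a ∈ P', b ≤ a) ∧
      (x k)⁻¹ * PosProd P = PosProd P' * (x k')⁻¹) := by
  intro P
  induction P with
  | nil =>
      intro k _
      right
      exact ⟨[], k, List.Pairwise.nil, by simp, by simp⟩
  | cons a t ih =>
      intro k hs
      obtain ⟨hs1, hs2⟩ := List.pairwise_cons.mp hs
      rcases Nat.lt_trichotomy k a with hlt | heq | hgt
      · -- k < a : shift everything
        right
        refine ⟨(a :: t).map (· + 1), k, ?_, ?_, ?_⟩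
        · exact List.Pairwise.map (· + 1) (fun p q h => Nat.add_le_add_right h 1) hs
        · intro b hb i hi
          obtain ⟨j, hj, rfl⟩ := List.mem_map.mp hi
          have := hb j hj; omega
        · exact shiftL (a :: t) k (fun i hi => by
            simp at hi
            rcases hi with rfl | hi
            · omega
            · have := hs1 i hi; omega)
      · -- k = a : cancel
        left
        subst heq
        refine ⟨t, hs2, fun b hb i hi => hb i (by simp [hi]), ?_⟩
        rw [PosProd_cons, ← mul_assoc, inv_mul_cancel, one_mul]
      · -- k > a : pass by
        rcases ih (k+1) hs2 with ⟨P', f1, f2, f3⟩ | ⟨P', k', f1, f2, f3⟩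
        · left
          refine ⟨a :: P', ?_, ?_, ?_⟩
          · exact List.pairwise_cons.mpr ⟨f2 a hs1, f1⟩
          · intro b hb i hi
            rcases List.mem_cons.mp hi with rfl | hi
            · exact hb i (by simp)
            · exact f2 b (fun j hj => le_trans (hb a (by simp)) (hs1 j hj)) i hi
          · rw [PosProd_cons, ← mul_assoc, d1 hgt, mul_assoc, f3, PosProd_cons]
        · right
          refine ⟨a :: P', k', ?_, ?_, ?_⟩
          · exact List.pairwise_cons.mpr ⟨f2 a hs1, f1⟩
          · intro b hb i hi
            rcases List.mem_cons.mp hi with rfl | hi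
            · exact hb i (by simp)
            · exact f2 b (fun j hj => le_trans (hb a (by simp)) (hs1 j hj)) i hi
          · rw [PosProd_cons, ← mul_assoc, d1 hgt, mul_assoc, f3, PosProd_cons]
            group

/-- the intermediate normal form -/
def SForm (g : ThompsonT) : Prop :=
  ∃ P R n e, SortedLE P ∧ SortedGE R ∧ e ≤ n+1 ∧
    g = PosProd P * c n ^ e * NegProd R

lemma sform_one : SForm 1 := ⟨[], [], 0, 0, List.Pairwise.nil, List.Pairwise.nil, by omega, by simp⟩

lemma sform_x (k : ℕ) {g : ThompsonT} (h : SForm g) : SForm (x k * g) := by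
  obtain ⟨P, R, n, e, h1, h2, h3, rfl⟩ := h
  exact ⟨insL P k, R, n, e, insL_sorted P k h1, h2, h3, by
    rw [← mul_assoc, ← mul_assoc, insL_eq]⟩

lemma sform_xinv (k : ℕ) {g : ThompsonT} (h : SForm g) : SForm ((x k)⁻¹ * g) := by
  obtain ⟨P, R, n, e, h1, h2, h3, rfl⟩ := h
  rcases pushXinv P k h1 with ⟨P', f1, _, f3⟩ | ⟨P', k', f1, _, f3⟩
  · exact ⟨P', R, n, e, f1, h2, h3, by
      rw [← mul_assoc, ← mul_assoc, f3]⟩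
  · rcases Nat.eq_zero_or_pos e with he0 | hep
    · refine ⟨P', insN R k', n, e, f1, insN_sorted R k' h2, h3, ?_⟩
      subst he0
      rw [← mul_assoc, ← mul_assoc, f3, pow_zero, mul_one, mul_one, mul_assoc,
        insN_eq]
    · obtain ⟨a', L, g1, g2, g3⟩ := XC (k := k') (n := n) (a := e) hep h3
      refine ⟨P', sortN L R, max n k' + 1, a', f1, sortN_sorted L R h2, by omega, ?_⟩
      calc (x k)⁻¹ * (PosProd P * c n ^ e * NegProd R)
          = ((x k)⁻¹ * PosProd P) * c n ^ e * NegProd R := by group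
        _ = PosProd P' * ((x k')⁻¹ * c n ^ e) * NegProd R := by rw [f3]; group
        _ = PosProd P' * (c (max n k' + 1) ^ a' * NegProd L) * NegProd R := by rw [g3]
        _ = PosProd P' * c (max n k' + 1) ^ a' * (NegProd L * NegProd R) := by group
        _ = PosProd P' * c (max n k' + 1) ^ a' * NegProd (sortN L R) := by rw [sortN_eq]

lemma sform_c (k : ℕ) {g : ThompsonT} (h : SForm g) : SForm (c k * g) := by
  obtain ⟨P, R, n, e, h1, h2, h3, rfl⟩ := h
  obtain ⟨L1, n', e1, g1, g2, g3⟩ := CP P k 1 (by omega) (by omega)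
  rw [pow_one] at g3
  rcases Nat.eq_zero_or_pos e with he0 | hep
  · refine ⟨sortP L1 [], R, n', e1, sortP_sorted L1 [] List.Pairwise.nil, h2, g2, ?_⟩
    subst he0
    calc c k * (PosProd P * c n ^ 0 * NegProd R)
        = (c k * PosProd P) * NegProd R := by simp; group
      _ = PosProd L1 * c n' ^ e1 * NegProd R := by rw [g3]
      _ = PosProd (sortP L1 []) * c n' ^ e1 * NegProd R := by
          rw [← sortP_eq]; simp
  · by_cases hnn : n' ≤ n
    · obtain ⟨L2, E, f1, f2⟩ := CCle hnn g2 h3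
      refine ⟨sortP L1 (sortP L2 []), R, n, E,
        sortP_sorted _ _ (sortP_sorted _ _ List.Pairwise.nil), h2, f1, ?_⟩
      calc c k * (PosProd P * c n ^ e * NegProd R)
          = (c k * PosProd P) * c n ^ e * NegProd R := by group
        _ = PosProd L1 * (c n' ^ e1 * c n ^ e) * NegProd R := by rw [g3]; group
        _ = PosProd L1 * (PosProd L2 * c n ^ E) * NegProd R := by rw [f2]
        _ = (PosProd L1 * (PosProd L2 * PosProd [])) * c n ^ E * NegProd R := by
            simp; group
        _ = PosProd (sortP L1 (sortP L2 [])) * c n ^ E * NegProd R := by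
            rw [sortP_eq, sortP_eq]
    · push_neg at hnn
      obtain ⟨E, L2, f1, f2⟩ := CCgt (le_of_lt hnn) g2 h3
      refine ⟨sortP L1 [], sortN L2 R, n', E,
        sortP_sorted _ _ List.Pairwise.nil, sortN_sorted _ _ h2, f1, ?_⟩
      calc c k * (PosProd P * c n ^ e * NegProd R)
          = (c k * PosProd P) * c n ^ e * NegProd R := by group
        _ = PosProd L1 * (c n' ^ e1 * c n ^ e) * NegProd R := by rw [g3]; group
        _ = PosProd L1 * (c n' ^ E * NegProd L2) * NegProd R := by rw [f2]
        _ = (PosProd L1 * PosProd []) * c n' ^ E * (NegProd L2 * NegProd R) := by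
            simp; group
        _ = PosProd (sortP L1 []) * c n' ^ E * NegProd (sortN L2 R) := by
            rw [sortP_eq, sortN_eq]

lemma sform_cpow (k m : ℕ) : ∀ {g : ThompsonT}, SForm g → SForm (c k ^ m * g) := by
  induction m with
  | zero => intro g h; simpa using h
  | succ m ih =>
      intro g h
      have heq : c k ^ (m+1) * g = c k ^ m * (c k * g) := by
        rw [pow_succ]; group
      rw [heq]
      exact ih (sform_c k h)

lemma sform_cinv (k : ℕ) {g : ThompsonT} (h : SForm g) : SForm ((c k)⁻¹ * g) := by
  have hc : (c k)⁻¹ = c k ^ (k+1) := by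
    apply inv_eq_of_mul_eq_one_right
    rw [← pow_succ']
    exact r5 k
  rw [hc]
  exact sform_cpow k (k+1) h

end TAux
namespace TAux

def toPairs : List ℕ → List (ℕ × ℕ)
  | [] => []
  | a :: t =>
    match toPairs t with
    | [] => [(a,1)]
    | (b,s) :: r => if a = b then (a, s+1) :: r else (a,1) :: (b,s) :: r

lemma posPart_pair_cons (p : ℕ × ℕ) (l : List (ℕ × ℕ)) :
    _root_.posPart (p :: l) = x p.1 ^ p.2 * _root_.posPart l := by
  simp [_root_.posPart]

lemma posPart_toPairs : ∀ L : List ℕ, _root_.posPart (toPairs L) = PosProd L := by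
  intro L
  induction L with
  | nil => simp [toPairs, _root_.posPart]
  | cons a t ih =>
      rcases h : toPairs t with _ | ⟨⟨b,s⟩, r⟩
      · rw [h] at ih
        simp only [toPairs, h]
        rw [posPart_pair_cons, PosProd_cons, ← ih]
        simp [_root_.posPart]
      · rw [h] at ih
        by_cases hab : a = b
        · simp only [toPairs, h, if_pos hab]
          subst hab
          rw [posPart_pair_cons, PosProd_cons, ← ih, posPart_pair_cons]
          simp [pow_succ']
          group
        · simp only [toPairs, h, if_neg hab]
          rw [posPart_pair_cons, PosProd_cons, ← ih]
          simp

lemma toPairs_good : ∀ L : List ℕ, SortedLE L →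
    Increasing (toPairs L) ∧ (∀ p ∈ toPairs L, p.1 ∈ L) ∧ PosExps (toPairs L) := by
  intro L
  induction L with
  | nil => exact fun _ => ⟨List.isChain_nil, by simp [toPairs], by intro p hp; simp [toPairs] at hp⟩
  | cons a t ih =>
      intro hs
      obtain ⟨hs1, hs2⟩ := List.pairwise_cons.mp hs
      obtain ⟨ih1, ih2, ih3⟩ := ih hs2
      rcases h : toPairs t with _ | ⟨⟨b,s⟩, r⟩
      · refine ⟨?_, ?_, ?_⟩
        · simp only [toPairs, h]
          exact List.isChain_singleton _
        · intro p hp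
          simp only [toPairs, h] at hp
          simp at hp
          simp [hp]
        · intro p hp
          simp only [toPairs, h] at hp
          simp at hp
          simp [hp]
      · rw [h] at ih1 ih2 ih3
        have hbt : b ∈ t := ih2 (b,s) (by simp)
        have hab : a ≤ b := hs1 b hbt
        by_cases he : a = b
        · refine ⟨?_, ?_, ?_⟩
          · simp only [toPairs, h, if_pos he]
            rcases r with _ | ⟨q, r'⟩
            · exact List.isChain_singleton _
            · unfold Increasing List.Chain' at ih1 ⊢
              rw [List.isChain_cons_cons]
              rw [List.isChain_cons_cons] at ih1
              exact ⟨by simpa [he] using ih1.1, ih1.2⟩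
          · intro p hp
            simp only [toPairs, h, if_pos he] at hp
            rcases List.mem_cons.mp hp with rfl | hp
            · simp
            · have := ih2 p (by simp [hp])
              simp [this]
          · intro p hp
            simp only [toPairs, h, if_pos he] at hp
            rcases List.mem_cons.mp hp with rfl | hp
            · simp
            · exact ih3 p (by simp [hp])
        · have hlt : a < b := by omega
          refine ⟨?_, ?_, ?_⟩
          · simp only [toPairs, h, if_neg he]
            unfold Increasing List.Chain' at ih1 ⊢
            rw [List.isChain_cons_cons]
            exact ⟨hlt, ih1⟩
          · intro p hp
            simp only [toPairs, h, if_neg he] at hp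
            rcases List.mem_cons.mp hp with rfl | hp
            · simp
            · have := ih2 p hp
              simp [this]
          · intro p hp
            simp only [toPairs, h, if_neg he] at hp
            rcases List.mem_cons.mp hp with rfl | hp
            · simp
            · exact ih3 p hp

lemma sform_pcq {g : ThompsonT} (h : SForm g) :
    ∃ (lp lq : List (ℕ × ℕ)) (i j : ℕ),
      Increasing lp ∧ Increasing lq ∧ PosExps lp ∧ PosExps lq ∧
      (j = 0 ∨ (1 ≤ j ∧ j < i + 2)) ∧
      g = posPart lp * c i ^ j * (posPart lq)⁻¹ := by
  obtain ⟨P, R, n, e, h1, h2, h3, rfl⟩ := h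
  have hrev : SortedLE R.reverse := List.pairwise_reverse.mpr h2
  obtain ⟨p1, _, p3⟩ := toPairs_good P h1
  obtain ⟨q1, _, q3⟩ := toPairs_good R.reverse hrev
  refine ⟨toPairs P, toPairs R.reverse, n, e, p1, q1, p3, q3, ?_, ?_⟩
  · rcases Nat.eq_zero_or_pos e with h0 | hp
    · exact Or.inl h0
    · exact Or.inr ⟨hp, by omega⟩
  · rw [posPart_toPairs, posPart_toPairs, NegProd_eq]

lemma all_sform (g : ThompsonT) : SForm g := by
  obtain ⟨w, rfl⟩ : ∃ w, pi w = g := QuotientGroup.mk'_surjective _ g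
  suffices h : ∀ h : ThompsonT, SForm h → SForm (pi w * h) by
    simpa using h 1 sform_one
  induction w using FreeGroup.induction_on with
  | C1 => intro h hh; simpa using hh
  | of y =>
      intro h hh
      rcases y with i | i
      · exact sform_x i hh
      · exact sform_c i hh
  | inv_of y _ =>
      intro h hh
      rw [MonoidHom.map_inv]
      rcases y with i | i
      · exact sform_xinv i hh
      · exact sform_cinv i hh
  | mul w1 w2 ih1 ih2 =>
      intro h hh
      rw [MonoidHom.map_mul, mul_assoc]
      exact ih1 _ (ih2 _ hh)

end TAux

/-- Every element of Thompson's group `T` admits a `pcq` expression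
`x_{i_1}^{r_1} ⋯ x_{i_n}^{r_n} · c_i^j · x_{j_m}^{-s_m} ⋯ x_{j_1}^{-s_1}`
with `0 ≤ i_1 < ⋯ < i_n`, `0 ≤ j_1 < ⋯ < j_m`, all `r_k, s_l > 0`, and either
`1 ≤ j < i + 2` or no torsion factor (`j = 0`). -/
theorem pcq_form_exists (g : ThompsonT) :
    ∃ (lp lq : List (ℕ × ℕ)) (i j : ℕ),
      Increasing lp ∧ Increasing lq ∧ PosExps lp ∧ PosExps lq ∧
      (j = 0 ∨ (1 ≤ j ∧ j < i + 2)) ∧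
      g = posPart lp * c i ^ j * (posPart lq)⁻¹ := by
  exact TAux.sform_pcq (TAux.all_sform g)
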